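/- Let l ≥ 2, p ≥ 1, and n_1, …, n_l ≥ 1. If n_i < 3 for some i ∈ {1, …, l − 1}, or if n_l = 1, then for every choice of weights and biases, the number of knots of the output of the l-layer ℝ → ℝ^p ReLU neural network with n_i neurons in layer i is strictly less than Σ_{i=1}^{l} n_i ∏_{j=i+1}^{l} (n_j + 1); that is, the upper bound is not tight. -/

import Mathlib

/-- The rectified linear unit `σ(x) = max(0, x)`. -/
noncomputable def relu (x : ℝ) : ℝ := max 0 x

/-- Outputs of hidden layer `i` (0-indexed, so layer `i` of the paper is index `i - 1`)
of a fully-connected feedforward ReLU network with scalar input.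
`n i` is the number of neurons in (0-indexed) layer `i`,
`w1 b1` are the input weights and biases of the first hidden layer, and
`w i`, `b i` are the weights and biases mapping layer `i` to layer `i + 1`. -/
noncomputable def layerOut (n : ℕ → ℕ)
    (w1 b1 : Fin (n 0) → ℝ)
    (w : (i : ℕ) → Fin (n (i + 1)) → Fin (n i) → ℝ)
    (b : (i : ℕ) → Fin (n (i + 1)) → ℝ) :
    (i : ℕ) → ℝ → Fin (n i) → ℝ
  | 0 => fun x k => relu (w1 k * x + b1 k)
  | (i + 1) => fun x k =>
      relu ((∑ j, w i k j * layerOut n w1 b1 w b i x j) + b i k)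

/-- The output `y : ℝ → ℝ^p` of an `l`-layer ReLU network (`l ≥ 1`), with output
weights `wOut` and output biases `bOut` applied to the last hidden layer `l - 1`. -/
noncomputable def netOut (l p : ℕ) (n : ℕ → ℕ)
    (w1 b1 : Fin (n 0) → ℝ)
    (w : (i : ℕ) → Fin (n (i + 1)) → Fin (n i) → ℝ)
    (b : (i : ℕ) → Fin (n (i + 1)) → ℝ)
    (wOut : Fin p → Fin (n (l - 1)) → ℝ) (bOut : Fin p → ℝ)
    (x : ℝ) : Fin p → ℝ :=
  fun k => (∑ j, wOut k j * layerOut n w1 b1 w b (l - 1) x j) + bOut k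


namespace KnotAux

/-- `f` is affine on the set `U`. -/
def AffOn (f : ℝ → ℝ) (U : Set ℝ) : Prop := ∃ p q : ℝ, ∀ x ∈ U, f x = p * x + q

/-- `f` is continuous and affine on every open order-connected set avoiding `A`. -/
def IsPW (A : Finset ℝ) (f : ℝ → ℝ) : Prop :=
  Continuous f ∧ ∀ U : Set ℝ, IsOpen U → U.OrdConnected → (∀ t ∈ A, t ∉ U) → AffOn f U

theorem IsPW.mono {A A' : Finset ℝ} {f : ℝ → ℝ} (h : IsPW A f) (hAA : A ⊆ A') : IsPW A' f :=
  ⟨h.1, fun U hU hoc hfree => h.2 U hU hoc fun t ht => hfree t (hAA ht)⟩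

/-- The maximal `A`-free "interval" around `x`. -/
def seg (A : Finset ℝ) (x : ℝ) : Set ℝ := {y | ∀ t ∈ A, t ∉ Set.uIcc x y}

theorem isOpen_seg (A : Finset ℝ) (x : ℝ) : IsOpen (seg A x) := by
  have : seg A x = ⋂ t ∈ A, {y | t ∉ Set.uIcc x y} := by
    ext y; simp [seg]
  rw [this]
  refine isOpen_biInter_finset fun t _ => ?_
  have : {y : ℝ | t ∉ Set.uIcc x y} = {y : ℝ | t ∈ Set.uIcc x y}ᶜ := rfl
  rw [this]
  have hcl : IsClosed {y : ℝ | t ∈ Set.uIcc x y} := by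
    have : {y : ℝ | t ∈ Set.uIcc x y} = {y : ℝ | x ⊓ y ≤ t} ∩ {y : ℝ | t ≤ x ⊔ y} := by
      ext y; simp [Set.uIcc, Set.mem_Icc]
    rw [this]
    exact IsClosed.inter (isClosed_le (continuous_const.min continuous_id) continuous_const)
      (isClosed_le continuous_const (continuous_const.max continuous_id))
  exact hcl.isOpen_compl

theorem ordConnected_seg (A : Finset ℝ) (x : ℝ) : (seg A x).OrdConnected := by
  constructor
  intro z1 hz1 z2 hz2 y hy t ht hmem
  have h1 : Set.uIcc x y ⊆ Set.uIcc x z1 ∪ Set.uIcc z1 y := Set.uIcc_subset_uIcc_union_uIcc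
  have h2 : Set.uIcc z1 y ⊆ Set.uIcc z1 z2 :=
    Set.uIcc_subset_uIcc Set.left_mem_uIcc (Set.Icc_subset_uIcc hy)
  have h3 : Set.uIcc z1 z2 ⊆ Set.uIcc z1 x ∪ Set.uIcc x z2 := Set.uIcc_subset_uIcc_union_uIcc
  rcases h1 hmem with h | h
  · exact hz1 t ht h
  · rcases h3 (h2 h) with h' | h'
    · exact hz1 t ht (Set.uIcc_comm z1 x ▸ h')
    · exact hz2 t ht h'

theorem mem_seg_self {A : Finset ℝ} {x : ℝ} (hx : x ∉ A) : x ∈ seg A x := by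
  intro t ht hmem
  rw [Set.uIcc_self, Set.mem_singleton_iff] at hmem
  exact hx (hmem ▸ ht)

theorem seg_disjoint {A : Finset ℝ} {x t : ℝ} (ht : t ∈ A) : t ∉ seg A x := by
  intro h
  exact h t ht Set.right_mem_uIcc

theorem not_mem_of_mem_seg {A : Finset ℝ} {x y t : ℝ} (hy : y ∈ seg A x) (ht : t ∈ A) :
    y ≠ t := fun h => seg_disjoint ht (h ▸ hy)

/-- Differentiability off the knot container. -/
theorem IsPW.differentiableAt {A : Finset ℝ} {f : ℝ → ℝ} (h : IsPW A f) {x : ℝ} (hx : x ∉ A) :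
    DifferentiableAt ℝ f x := by
  obtain ⟨p, q, hpq⟩ := h.2 (seg A x) (isOpen_seg A x) (ordConnected_seg A x)
    (fun t ht hmem => seg_disjoint ht hmem)
  have hd : DifferentiableAt ℝ (fun y : ℝ => p * y + q) x :=
    ((differentiable_id.const_mul p).add_const q).differentiableAt
  refine hd.congr_of_eventuallyEq ?_
  filter_upwards [(isOpen_seg A x).mem_nhds (mem_seg_self hx)] with y hy
  exact hpq y hy

/-! ### Frontier lemmas -/

theorem frontier_val_zero {h : ℝ → ℝ} (hc : Continuous h) {wpt : ℝ}
    (hw : wpt ∈ frontier {x | 0 < h x}) : h wpt = 0 := by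
  have hopen : IsOpen {x | 0 < h x} := isOpen_lt continuous_const hc
  have h1 : wpt ∉ {x | 0 < h x} := by
    intro hmem
    rw [frontier, hopen.interior_eq] at hw
    exact hw.2 hmem
  have h2 : wpt ∈ closure {x | 0 < h x} := hw.1
  have h3 : closure {x | 0 < h x} ⊆ {x | 0 ≤ h x} := by
    exact closure_minimal (fun x hx => (le_of_lt hx : (0:ℝ) ≤ h x)) (isClosed_le continuous_const hc)
  have := h3 h2
  simp only [Set.mem_setOf_eq, not_lt] at h1 this
  linarith

theorem frontier_cluster {h : ℝ → ℝ} {wpt : ℝ}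
    (hw : wpt ∈ frontier {x | 0 < h x}) {U : Set ℝ} (hU : IsOpen U) (hwU : wpt ∈ U) :
    ∃ y ∈ U, 0 < h y := by
  have := hw.1
  rw [mem_closure_iff] at this
  obtain ⟨y, hy1, hy2⟩ := this U hU hwU
  exact ⟨y, hy1, hy2⟩

/-- No frontier point of `{h > 0}` in an open set where `h` is constant. -/
theorem not_frontier_of_const {h : ℝ → ℝ} {U : Set ℝ} (hU : IsOpen U) {c : ℝ}
    (hconst : ∀ x ∈ U, h x = c) {wpt : ℝ} (hwU : wpt ∈ U) :
    wpt ∉ frontier {x | 0 < h x} := by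
  intro hw
  rcases le_or_gt c 0 with hc | hc
  · obtain ⟨y, hyU, hy⟩ := frontier_cluster hw hU hwU
    rw [hconst y hyU] at hy; linarith
  · have : wpt ∈ interior {x | 0 < h x} := by
      rw [mem_interior]
      exact ⟨U, fun x hx => by simp only [Set.mem_setOf_eq]; rw [hconst x hx]; exact hc,
        hU, hwU⟩
    exact hw.2 this

/-- At most one frontier point of `{h > 0}` in an open set where `h` is affine. -/
theorem frontier_unique_of_affOn {h : ℝ → ℝ} (hc : Continuous h) {U : Set ℝ} (hU : IsOpen U)
    (haff : AffOn h U) {z z' : ℝ} (hz : z ∈ U ∧ z ∈ frontier {x | 0 < h x})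
    (hz' : z' ∈ U ∧ z' ∈ frontier {x | 0 < h x}) : z = z' := by
  obtain ⟨p, q, hpq⟩ := haff
  rcases eq_or_ne p 0 with hp | hp
  · exfalso
    refine not_frontier_of_const hU (c := q) (fun x hx => by rw [hpq x hx, hp]; ring) hz.1 hz.2
  · have h1 : p * z + q = 0 := by rw [← hpq z hz.1]; exact frontier_val_zero hc hz.2
    have h2 : p * z' + q = 0 := by rw [← hpq z' hz'.1]; exact frontier_val_zero hc hz'.2
    have : p * (z - z') = 0 := by ring_nf; linarith
    rcases mul_eq_zero.mp this with h | h
    · exact absurd h hp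
    · linarith

/-- Frontier points of `{g > 0}` outside `A` in the same `A`-free interval coincide. -/
theorem frontier_uniq {A : Finset ℝ} {g : ℝ → ℝ} (hg : IsPW A g) {z z' : ℝ}
    (hz : z ∈ frontier {x | 0 < g x}) (hzA : z ∉ A)
    (hz' : z' ∈ frontier {x | 0 < g x})
    (hfree : ∀ t ∈ A, t ∉ Set.uIcc z z') : z = z' := by
  have hzseg : z ∈ seg A z := mem_seg_self hzA
  have hz'seg : z' ∈ seg A z := hfree
  have haff := hg.2 (seg A z) (isOpen_seg A z) (ordConnected_seg A z)
    (fun t ht hm => seg_disjoint ht hm)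
  exact frontier_unique_of_affOn hg.1 (isOpen_seg A z) haff ⟨hzseg, hz⟩ ⟨hz'seg, hz'⟩

end KnotAux
/-! ### Counting lemmas -/
namespace KnotAux

open Finset in
/-- Key: equal "number of `A`-points below" means same `A`-interval. -/
theorem filter_card_eq {A : Finset ℝ} {z z' : ℝ} (hz : z ∉ A) (hz' : z' ∉ A)
    (h : (A.filter (· < z)).card = (A.filter (· < z')).card) :
    ∀ t ∈ A, t ∉ Set.uIcc z z' := by
  have key : ∀ u u' : ℝ, u ∉ A → u' ∉ A → u ≤ u' →
      (A.filter (· < u)).card = (A.filter (· < u')).card →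
      ∀ t ∈ A, t ∉ Set.Icc u u' := by
    intro u u' hu hu' hle hcard t ht hm
    have hsub : A.filter (· < u) ⊆ A.filter (· < u') := by
      intro x hx
      rw [Finset.mem_filter] at hx ⊢
      exact ⟨hx.1, lt_of_lt_of_le hx.2 hle⟩
    have heq : A.filter (· < u) = A.filter (· < u') :=
      Finset.eq_of_subset_of_card_le hsub (le_of_eq hcard.symm)
    rw [Set.mem_Icc] at hm
    have h2 : t ≠ u' := fun h => hu' (h ▸ ht)
    have h1 : t ≠ u := fun h => hu (h ▸ ht)
    have htu' : t < u' := lt_of_le_of_ne hm.2 h2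
    have : t ∈ A.filter (· < u) := heq ▸ Finset.mem_filter.mpr ⟨ht, htu'⟩
    have := (Finset.mem_filter.mp this).2
    have : u < t := lt_of_le_of_ne hm.1 (Ne.symm h1)
    linarith
  intro t ht hm
  rcases le_total z z' with hle | hle
  · exact key z z' hz hz' hle h t ht (by rwa [Set.uIcc_of_le hle] at hm)
  · exact key z' z hz' hz hle h.symm t ht (by rwa [Set.uIcc_of_ge hle] at hm)

theorem fcount {A Z : Finset ℝ} (hd : ∀ z ∈ Z, z ∉ A)
    (hu : ∀ z ∈ Z, ∀ z' ∈ Z, (∀ t ∈ A, t ∉ Set.uIcc z z') → z = z') :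
    Z.card ≤ A.card + 1 := by
  have := Finset.card_le_card_of_injOn (fun z => (A.filter (· < z)).card)
    (t := Finset.range (A.card + 1))
    (fun z _ => Finset.mem_range.mpr (Nat.lt_succ_of_le (Finset.card_filter_le _ _)))
    (fun z hz z' hz' h => hu z hz z' hz' (filter_card_eq (hd z hz) (hd z' hz') h))
  simpa using this

theorem fcount' {A Z : Finset ℝ} {x0 : ℝ} (hx0 : x0 ∉ A) (hd : ∀ z ∈ Z, z ∉ A)
    (hu : ∀ z ∈ Z, ∀ z' ∈ Z, (∀ t ∈ A, t ∉ Set.uIcc z z') → z = z')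
    (hmiss : ∀ z ∈ Z, ∃ t ∈ A, t ∈ Set.uIcc x0 z) :
    Z.card ≤ A.card := by
  have hmem : (A.filter (· < x0)).card ∈ Finset.range (A.card + 1) :=
    Finset.mem_range.mpr (Nat.lt_succ_of_le (Finset.card_filter_le _ _))
  have := Finset.card_le_card_of_injOn (fun z => (A.filter (· < z)).card)
    (t := (Finset.range (A.card + 1)).erase ((A.filter (· < x0)).card))
    (fun z hz => by
      refine Finset.mem_erase.mpr ⟨?_, Finset.mem_range.mpr (Nat.lt_succ_of_le (Finset.card_filter_le _ _))⟩
      intro he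
      obtain ⟨t, ht, htm⟩ := hmiss z hz
      exact filter_card_eq (hd z hz) hx0 he t ht (Set.uIcc_comm z x0 ▸ htm))
    (fun z hz z' hz' h => hu z hz z' hz' (filter_card_eq (hd z hz) (hd z' hz') h))
  rwa [Finset.card_erase_of_mem hmem, Finset.card_range, Nat.add_sub_cancel] at this

open Classical in
theorem fcount2 {A Z : Finset ℝ} (hd : ∀ z ∈ Z, z ∉ A)
    (hu : ∀ z ∈ Z, ∀ z' ∈ Z, (∀ t ∈ A, t ∉ Set.uIcc z z') → z = z')
    (hub : ∀ z ∈ Z, ¬((∃ t ∈ A, t < z) ∧ (∃ t ∈ A, z < t))) :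
    Z.card ≤ 2 := by
  have := Finset.card_le_card_of_injOn (fun z => if ∃ t ∈ A, t < z then true else false)
    (t := (Finset.univ : Finset Bool)) (fun z _ => Finset.mem_univ _)
    (fun z hz z' hz' h => by
      simp only [Finset.mem_coe] at hz hz'
      refine hu z hz z' hz' ?_
      have key : ∀ u u' : ℝ, u ∈ Z → u' ∈ Z → u ≤ u' →
          ((if ∃ t ∈ A, t < u then true else false) = if ∃ t ∈ A, t < u' then true else false) →
          ∀ t ∈ A, t ∉ Set.Icc u u' := by
        intro u u' hu1 hu2 hle hif t ht htm
        rw [Set.mem_Icc] at htm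
        have h1 : t ≠ u := fun h => hd u hu1 (h ▸ ht)
        have h2 : t ≠ u' := fun h => hd u' hu2 (h ▸ ht)
        have hlt1 : u < t := lt_of_le_of_ne htm.1 (Ne.symm h1)
        have hlt2 : t < u' := lt_of_le_of_ne htm.2 h2
        by_cases hb : ∃ t ∈ A, t < u
        · obtain ⟨t0, ht0, ht0z⟩ := hb
          exact hub u hu1 ⟨⟨t0, ht0, ht0z⟩, ⟨t, ht, hlt1⟩⟩
        · have hb' : ∃ t ∈ A, t < u' := ⟨t, ht, hlt2⟩
          simp only [hb, hb', if_true, if_false] at hif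
          exact absurd hif (by simp)
      intro t ht htm
      rcases le_total z z' with hle | hle
      · exact key z z' hz hz' hle h t ht (by rwa [Set.uIcc_of_le hle] at htm)
      · exact key z' z hz' hz hle h.symm t ht (by rwa [Set.uIcc_of_ge hle] at htm))
  simpa using this

theorem finite_of_uniq {A : Finset ℝ} {W : Set ℝ} (hd : ∀ z ∈ W, z ∉ A)
    (hu : ∀ z ∈ W, ∀ z' ∈ W, (∀ t ∈ A, t ∉ Set.uIcc z z') → z = z') :
    W.Finite := by
  have hinj : Set.InjOn (fun z => (A.filter (· < z)).card) W :=
    fun z hz z' hz' h => hu z hz z' hz' (filter_card_eq (hd z hz) (hd z' hz') h)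
  have himg : ((fun z => (A.filter (· < z)).card) '' W).Finite := by
    refine Set.Finite.subset (Set.finite_Icc 0 A.card) ?_
    rintro _ ⟨z, _, rfl⟩
    exact ⟨Nat.zero_le _, Finset.card_filter_le _ _⟩
  exact Set.Finite.of_finite_image himg hinj

/-! ### Sign dichotomy on connected avoiding frontier -/

theorem pos_dichotomy {g : ℝ → ℝ} (hc : Continuous g) {U : Set ℝ} (hU : IsOpen U)
    (hoc : U.OrdConnected) (hfr : ∀ x ∈ U, x ∉ frontier {x | 0 < g x}) :
    (∀ x ∈ U, 0 < g x) ∨ (∀ x ∈ U, g x ≤ 0) := by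
  set P := {x | 0 < g x} with hP
  have hPopen : IsOpen P := isOpen_lt continuous_const hc
  have hpre : IsPreconnected U := isPreconnected_iff_ordConnected.mpr hoc
  have hsub : U ⊆ interior P ∪ (closure P)ᶜ := by
    intro x hx
    by_cases h1 : x ∈ interior P
    · exact Or.inl h1
    by_cases h2 : x ∈ closure P
    · exact absurd ⟨h2, h1⟩ (hfr x hx)
    · exact Or.inr h2
  rcases hpre.subset_or_subset isOpen_interior (isClosed_closure.isOpen_compl)
    (disjoint_compl_right.mono_left (interior_subset.trans subset_closure)) hsub with h | h
  · exact Or.inl fun x hx => show x ∈ P from interior_subset (h hx)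
  · refine Or.inr fun x hx => ?_
    have : x ∉ P := fun hp => (h hx) (subset_closure hp)
    simpa [hP] using this

end KnotAux
namespace KnotAux

theorem relu_eq_self {y : ℝ} (h : 0 ≤ y) : relu y = y := max_eq_right h
theorem relu_eq_zero {y : ℝ} (h : y ≤ 0) : relu y = 0 := max_eq_left h
theorem continuous_relu : Continuous relu := continuous_const.max continuous_id

theorem IsPW.relu_comp_cont {A : Finset ℝ} {g : ℝ → ℝ} (hg : IsPW A g) :
    Continuous fun x => relu (g x) := continuous_const.max hg.1

/-- The main step: taking relu of a PW function. `Z` is the set of new knots. -/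
theorem reluStep {A : Finset ℝ} {g : ℝ → ℝ} (hg : IsPW A g) :
    ∃ Z : Finset ℝ,
      (∀ z ∈ Z, z ∈ frontier {x | 0 < g x} ∧ z ∉ A) ∧
      (∀ z, z ∈ frontier {x | 0 < g x} → z ∉ A → z ∈ Z) ∧
      (∀ z ∈ Z, ∀ z' ∈ Z, (∀ t ∈ A, t ∉ Set.uIcc z z') → z = z') ∧
      IsPW ((A.filter fun t => 0 ≤ g t) ∪ Z) (fun x => relu (g x)) := by
  classical
  set P := {x | 0 < g x} with hP
  set W := frontier P \ ↑A with hW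
  have hWd : ∀ z ∈ W, z ∉ A := fun z hz => by
    simpa using hz.2
  have hWu : ∀ z ∈ W, ∀ z' ∈ W, (∀ t ∈ A, t ∉ Set.uIcc z z') → z = z' :=
    fun z hz z' hz' hfree => frontier_uniq hg hz.1 (hWd z hz) hz'.1 hfree
  have hWfin : W.Finite := finite_of_uniq hWd hWu
  refine ⟨hWfin.toFinset, ?_, ?_, ?_, ?_⟩
  · intro z hz
    rw [Set.Finite.mem_toFinset] at hz
    exact ⟨hz.1, hWd z hz⟩
  · intro z h1 h2
    rw [Set.Finite.mem_toFinset]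
    exact ⟨h1, by simpa using h2⟩
  · intro z hz z' hz' hfree
    rw [Set.Finite.mem_toFinset] at hz hz'
    exact hWu z hz z' hz' hfree
  · refine ⟨hg.relu_comp_cont, ?_⟩
    intro U hU hoc hfree
    have hfr : ∀ x ∈ U, x ∉ frontier P := by
      intro x hx hxfr
      by_cases hxA : x ∈ A
      · have : g x = 0 := frontier_val_zero hg.1 hxfr
        exact hfree x (Finset.mem_union_left _ (Finset.mem_filter.mpr ⟨hxA, le_of_eq this.symm⟩)) hx
      · exact hfree x (Finset.mem_union_right _ (Set.Finite.mem_toFinset _ |>.mpr ⟨hxfr, by simpa using hxA⟩)) hx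
    rcases pos_dichotomy hg.1 hU hoc hfr with hpos | hneg
    · have hUA : ∀ t ∈ A, t ∉ U := by
        intro t ht htU
        by_cases htf : 0 ≤ g t
        · exact hfree t (Finset.mem_union_left _ (Finset.mem_filter.mpr ⟨ht, htf⟩)) htU
        · exact htf (le_of_lt (hpos t htU))
      obtain ⟨p, q, hpq⟩ := hg.2 U hU hoc hUA
      exact ⟨p, q, fun x hx => by show relu (g x) = p * x + q; rw [relu_eq_self (le_of_lt (hpos x hx)), hpq x hx]⟩
    · exact ⟨0, 0, fun x hx => by show relu (g x) = 0 * x + 0; rw [relu_eq_zero (hneg x hx)]; ring⟩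

/-! ### Closure of IsPW under affine combinations -/

theorem IsPW.const_mul {A : Finset ℝ} {f : ℝ → ℝ} (hf : IsPW A f) (c : ℝ) :
    IsPW A (fun x => c * f x) := by
  refine ⟨continuous_const.mul hf.1, fun U hU hoc hfree => ?_⟩
  obtain ⟨p, q, hpq⟩ := hf.2 U hU hoc hfree
  exact ⟨c * p, c * q, fun x hx => by show c * f x = c * p * x + c * q; rw [hpq x hx]; ring⟩

theorem IsPW.add_const {A : Finset ℝ} {f : ℝ → ℝ} (hf : IsPW A f) (c : ℝ) :
    IsPW A (fun x => f x + c) := by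
  refine ⟨hf.1.add continuous_const, fun U hU hoc hfree => ?_⟩
  obtain ⟨p, q, hpq⟩ := hf.2 U hU hoc hfree
  exact ⟨p, q + c, fun x hx => by show f x + c = p * x + (q + c); rw [hpq x hx]; ring⟩

theorem IsPW.add {A : Finset ℝ} {f g : ℝ → ℝ} (hf : IsPW A f) (hg : IsPW A g) :
    IsPW A (fun x => f x + g x) := by
  refine ⟨hf.1.add hg.1, fun U hU hoc hfree => ?_⟩
  obtain ⟨p, q, hpq⟩ := hf.2 U hU hoc hfree
  obtain ⟨p', q', hpq'⟩ := hg.2 U hU hoc hfree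
  exact ⟨p + p', q + q', fun x hx => by show f x + g x = (p + p') * x + (q + q'); rw [hpq x hx, hpq' x hx]; ring⟩

theorem IsPW.const {A : Finset ℝ} (c : ℝ) : IsPW A (fun _ => c) :=
  ⟨continuous_const, fun U _ _ _ => ⟨0, c, fun x _ => by ring⟩⟩

theorem IsPW.sum {A : Finset ℝ} {ι : Type*} (s : Finset ι) (f : ι → ℝ → ℝ)
    (hf : ∀ j ∈ s, IsPW A (f j)) : IsPW A (fun x => ∑ j ∈ s, f j x) := by
  classical
  induction s using Finset.induction with
  | empty => simpa using IsPW.const 0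
  | insert a s' hni ih =>
    have h1 : IsPW A (f a) := hf a (Finset.mem_insert_self a s')
    have h2 : IsPW A (fun x => ∑ j ∈ s', f j x) :=
      ih fun j hj => hf j (Finset.mem_insert_of_mem hj)
    have := h1.add h2
    refine ⟨this.1.congr ?_, fun U hU hoc hfree => ?_⟩
    · intro x; rw [Finset.sum_insert hni]
    · obtain ⟨p, q, hpq⟩ := this.2 U hU hoc hfree
      exact ⟨p, q, fun x hx => by show (∑ j ∈ insert a s', f j x) = p * x + q; rw [Finset.sum_insert hni]; exact hpq x hx⟩

theorem IsPW.combo {A : Finset ℝ} {ι : Type*} [Fintype ι] (V : ι → ℝ → ℝ)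
    (hV : ∀ j, IsPW A (V j)) (c : ι → ℝ) (d : ℝ) :
    IsPW A (fun x => (∑ j, c j * V j x) + d) :=
  (IsPW.sum Finset.univ (fun j x => c j * V j x) (fun j _ => (hV j).const_mul (c j))).add_const d

/-! ### Layer step lemmas -/

/-- Generic layer step. -/
theorem step {A : Finset ℝ} {κ : Type*} [Fintype κ] (H : κ → ℝ → ℝ)
    (hH : ∀ k, IsPW A (H k)) :
    ∃ A' : Finset ℝ, A ⊆ A' ∧ (∀ k, IsPW A' (fun x => relu (H k x))) ∧
      A'.card ≤ A.card + (Fintype.card κ) * (A.card + 1) := by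
  classical
  choose Z hZ1 _hZ2 hZ3 hZ4 using fun k => reluStep (hH k)
  refine ⟨A ∪ Finset.univ.biUnion Z, Finset.subset_union_left, ?_, ?_⟩
  · intro k
    refine (hZ4 k).mono ?_
    intro t ht
    rcases Finset.mem_union.mp ht with h | h
    · exact Finset.mem_union_left _ (Finset.filter_subset _ _ h)
    · exact Finset.mem_union_right _ (Finset.mem_biUnion.mpr ⟨k, Finset.mem_univ _, h⟩)
  · calc (A ∪ Finset.univ.biUnion Z).card ≤ A.card + (Finset.univ.biUnion Z).card :=
          Finset.card_union_le _ _
      _ ≤ A.card + ∑ k, (Z k).card := by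
          gcongr; exact Finset.card_biUnion_le
      _ ≤ A.card + ∑ _k : κ, (A.card + 1) := by
          gcongr with k
          exact fcount (fun z hz => (hZ1 k z hz).2) (hZ3 k)
      _ = A.card + (Fintype.card κ) * (A.card + 1) := by
          rw [Finset.sum_const, Finset.card_univ, smul_eq_mul]

/-- Layer step when every neuron misses at least one interval. -/
theorem step' {A : Finset ℝ} {κ : Type*} [Fintype κ] (H : κ → ℝ → ℝ)
    (hH : ∀ k, IsPW A (H k))
    (hmiss : ∀ k, ∃ x0, x0 ∉ A ∧ ∀ y ∈ seg A x0, y ∉ frontier {x | 0 < H k x}) :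
    ∃ A' : Finset ℝ, A ⊆ A' ∧ (∀ k, IsPW A' (fun x => relu (H k x))) ∧
      A'.card ≤ A.card + (Fintype.card κ) * A.card := by
  classical
  choose Z hZ1 _hZ2 hZ3 hZ4 using fun k => reluStep (hH k)
  refine ⟨A ∪ Finset.univ.biUnion Z, Finset.subset_union_left, ?_, ?_⟩
  · intro k
    refine (hZ4 k).mono ?_
    intro t ht
    rcases Finset.mem_union.mp ht with h | h
    · exact Finset.mem_union_left _ (Finset.filter_subset _ _ h)
    · exact Finset.mem_union_right _ (Finset.mem_biUnion.mpr ⟨k, Finset.mem_univ _, h⟩)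
  · calc (A ∪ Finset.univ.biUnion Z).card ≤ A.card + (Finset.univ.biUnion Z).card :=
          Finset.card_union_le _ _
      _ ≤ A.card + ∑ k, (Z k).card := by
          gcongr; exact Finset.card_biUnion_le
      _ ≤ A.card + ∑ _k : κ, A.card := by
          refine Nat.add_le_add_left (Finset.sum_le_sum ?_) _
          intro k _
          obtain ⟨x0, hx0A, hx0⟩ := hmiss k
          refine fcount' hx0A (fun z hz => (hZ1 k z hz).2) (hZ3 k) ?_
          intro z hz
          by_contra hc
          push_neg at hc
          have : z ∈ seg A x0 := fun t ht hm => hc t ht hm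
          exact hx0 z this (hZ1 k z hz).1
      _ = A.card + (Fintype.card κ) * A.card := by
          rw [Finset.sum_const, Finset.card_univ, smul_eq_mul]

end KnotAux
namespace KnotAux

theorem IsPW.congr {A : Finset ℝ} {f f' : ℝ → ℝ} (hf : IsPW A f) (h : ∀ x, f' x = f x) :
    IsPW A f' := by
  have hff : f' = f := funext h
  rwa [hff]

theorem infinite_left {T : Set ℝ} (hT : IsOpen T) {z : ℝ} (hz : z ∈ T) :
    (T ∩ Set.Iio z).Infinite := by
  obtain ⟨ε, hε, hball⟩ := Metric.isOpen_iff.mp hT z hz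
  have hsub : Set.Ioo (z - ε) z ⊆ T ∩ Set.Iio z := by
    intro y hy
    refine ⟨hball ?_, hy.2⟩
    rw [Metric.mem_ball, Real.dist_eq, abs_lt]
    constructor <;> [linarith [hy.1]; linarith [hy.2]]
  exact (Set.infinite_coe_iff.mp (Set.Ioo.infinite (by linarith))).mono hsub

theorem infinite_right {T : Set ℝ} (hT : IsOpen T) {z : ℝ} (hz : z ∈ T) :
    (T ∩ Set.Ioi z).Infinite := by
  obtain ⟨ε, hε, hball⟩ := Metric.isOpen_iff.mp hT z hz
  have hsub : Set.Ioo z (z + ε) ⊆ T ∩ Set.Ioi z := by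
    intro y hy
    refine ⟨hball ?_, hy.1⟩
    rw [Metric.mem_ball, Real.dist_eq, abs_lt]
    constructor <;> [linarith [hy.1]; linarith [hy.2]]
  exact (Set.infinite_coe_iff.mp (Set.Ioo.infinite (by linarith))).mono hsub

/-- Narrow layer of width 1: the next layer's knot container loses at least one knot. -/
theorem narrow1 {s : Finset ℝ} {g : ℝ → ℝ} (hg : IsPW s g) {κ : Type*} [Fintype κ]
    (hκ : 1 ≤ Fintype.card κ) (c d : κ → ℝ) (H : κ → ℝ → ℝ)
    (hH : ∀ k x, H k x = c k * relu (g x) + d k) :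
    ∃ K' : Finset ℝ, (∀ k, IsPW K' (fun x => relu (H k x))) ∧
      K'.card + 1 ≤ (Fintype.card κ + 1) * (2 * s.card + 1) + Fintype.card κ := by
  classical
  obtain ⟨Z, hZ1, hZ2, hZ3, hZ4⟩ := reluStep hg
  set A0 : Finset ℝ := s ∪ Z with hA0
  set q := Fintype.card κ
  have hZcard : Z.card ≤ s.card + 1 := fcount (fun z hz => (hZ1 z hz).2) hZ3
  have hA0card : A0.card ≤ 2 * s.card + 1 := by
    calc A0.card ≤ s.card + Z.card := Finset.card_union_le _ _
      _ ≤ 2 * s.card + 1 := by omega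
  have hvPW : IsPW A0 (fun x => relu (g x)) := hZ4.mono (by
    intro t ht
    rcases Finset.mem_union.mp ht with h | h
    · exact Finset.mem_union_left _ (Finset.filter_subset _ _ h)
    · exact Finset.mem_union_right _ h)
  have hHPW : ∀ k, IsPW A0 (H k) :=
    fun k => (((hvPW.const_mul (c k)).add_const (d k)).congr (hH k))
  have hfrsub : ∀ x, x ∈ frontier {x | 0 < g x} → x ∈ A0 := by
    intro x hx
    by_cases hxs : x ∈ s
    · exact Finset.mem_union_left _ hxs
    · exact Finset.mem_union_right _ (hZ2 x hx hxs)
  by_cases hex : ∃ x0, x0 ∉ A0 ∧ g x0 ≤ 0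
  · -- some interval where the neuron output vanishes
    obtain ⟨x0, hx0A, hx0g⟩ := hex
    have hsegfr : ∀ y ∈ seg A0 x0, y ∉ frontier {x | 0 < g x} := by
      intro y hy hyf
      exact seg_disjoint (hfrsub y hyf) hy
    have hT0 : ∀ y ∈ seg A0 x0, relu (g y) = 0 := by
      rcases pos_dichotomy hg.1 (isOpen_seg A0 x0) (ordConnected_seg A0 x0) hsegfr with hpos | hneg
      · exact absurd (hpos x0 (mem_seg_self hx0A)) (not_lt.mpr hx0g)
      · exact fun y hy => relu_eq_zero (hneg y hy)
    have hmiss : ∀ k, ∃ x1, x1 ∉ A0 ∧ ∀ y ∈ seg A0 x1, y ∉ frontier {x | 0 < H k x} := by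
      intro k
      refine ⟨x0, hx0A, fun y hy => ?_⟩
      exact not_frontier_of_const (isOpen_seg A0 x0) (c := d k)
        (fun x hx => by rw [hH k x, hT0 x hx]; ring) hy
    obtain ⟨A', _, hA'PW, hA'card⟩ := step' H hHPW hmiss
    refine ⟨A', hA'PW, ?_⟩
    have : A'.card ≤ (q + 1) * (2 * s.card + 1) := by
      calc A'.card ≤ A0.card + q * A0.card := hA'card
        _ = (q + 1) * A0.card := by ring
        _ ≤ (q + 1) * (2 * s.card + 1) := by exact Nat.mul_le_mul_left _ hA0card
    omega
  · -- the neuron equals its preactivation: it is PW on s itself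
    push_neg at hex
    have hv' : IsPW s (fun x => relu (g x)) := by
      refine ⟨hg.relu_comp_cont, fun U hU hoc hfree => ?_⟩
      obtain ⟨p, q', hpq⟩ := hg.2 U hU hoc hfree
      refine ⟨p, q', fun x hx => ?_⟩
      show relu (g x) = p * x + q'
      have h0 : 0 ≤ g x := by
        by_cases hxA : x ∈ A0
        · rcases Finset.mem_union.mp hxA with h | h
          · exact absurd hx (hfree x h)
          · exact le_of_eq (frontier_val_zero hg.1 (hZ1 x h).1).symm
        · exact le_of_lt (hex x hxA)
      rw [relu_eq_self h0, hpq x hx]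
    have hH' : ∀ k, IsPW s (H k) :=
      fun k => (((hv'.const_mul (c k)).add_const (d k)).congr (hH k))
    obtain ⟨A', _, hA'PW, hA'card⟩ := step H hH'
    refine ⟨A', hA'PW, ?_⟩
    have h1 : A'.card ≤ s.card + q * (s.card + 1) := hA'card
    nlinarith [Nat.zero_le (q * s.card)]

end KnotAux
namespace KnotAux

/-- Two distinct crossing points of the two neurons of a width-2 layer in a common
knot-free interval force every next-layer preactivation to miss a crossing in one
of the three subintervals. -/
theorem cross {s : Finset ℝ} {g1 g2 : ℝ → ℝ} (hg1 : IsPW s g1) (hg2 : IsPW s g2)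
    (A0 : Finset ℝ) (hsA : s ⊆ A0) {z1 z2 : ℝ}
    (hz1A : z1 ∈ A0) (hz2A : z2 ∈ A0)
    (hz1 : z1 ∈ frontier {x | 0 < g1 x}) (hz1s : z1 ∉ s)
    (hz2 : z2 ∈ frontier {x | 0 < g2 x}) (hz2s : z2 ∉ s)
    (h12 : z1 < z2) (hfree : ∀ t ∈ s, t ∉ Set.uIcc z1 z2)
    (c1 c2 d : ℝ) (h : ℝ → ℝ) (hh : ∀ x, h x = c1 * relu (g1 x) + c2 * relu (g2 x) + d) :
    ∃ x0, x0 ∉ A0 ∧ ∀ y ∈ seg A0 x0, y ∉ frontier {x | 0 < h x} := by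
  classical
  have hhc : Continuous h := by
    have : Continuous fun x => c1 * relu (g1 x) + c2 * relu (g2 x) + d :=
      (((continuous_const.mul hg1.relu_comp_cont).add
        (continuous_const.mul hg2.relu_comp_cont)).add continuous_const)
    exact this.congr fun x => (hh x).symm
  set T := seg s z1 with hT
  have hTopen : IsOpen T := isOpen_seg s z1
  have hToc : T.OrdConnected := ordConnected_seg s z1
  have hz1T : z1 ∈ T := mem_seg_self hz1s
  have hz2T : z2 ∈ T := hfree
  have hTs : ∀ x ∈ T, x ∉ s := fun x hxT hxs => seg_disjoint hxs hxT
  obtain ⟨p1, q1, hp1⟩ := hg1.2 T hTopen hToc (fun t ht htm => seg_disjoint ht htm)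
  obtain ⟨p2, q2, hp2⟩ := hg2.2 T hTopen hToc (fun t ht htm => seg_disjoint ht htm)
  have hg1z1 : g1 z1 = 0 := frontier_val_zero hg1.1 hz1
  have hg2z2 : g2 z2 = 0 := frontier_val_zero hg2.1 hz2
  have hfr1 : ∀ w ∈ T, w ∈ frontier {x | 0 < g1 x} → w = z1 := by
    intro w hwT hwf
    exact frontier_uniq hg1 hwf (hTs w hwT) hz1
      (fun t ht htm => hwT t ht (Set.uIcc_comm z1 w ▸ htm))
  have hfr2 : ∀ w ∈ T, w ∈ frontier {x | 0 < g2 x} → w = z2 := by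
    intro w hwT hwf
    refine frontier_uniq hg2 hwf (hTs w hwT) hz2 ?_
    intro t ht htm
    rcases Set.uIcc_subset_uIcc_union_uIcc (b := z1) htm with hm | hm
    · exact hwT t ht (Set.uIcc_comm z1 w ▸ Set.uIcc_comm w z1 ▸ hm)
    · exact hfree t ht (Set.uIcc_comm z1 z2 ▸ hm)
  -- regions
  set Tneg := T ∩ Set.Iio z1 with hTneg
  set Tm := Set.Ioo z1 z2 with hTm
  set Tpos := T ∩ Set.Ioi z2 with hTpos
  set Tl := T ∩ Set.Iio z2 with hTl
  set Tr := T ∩ Set.Ioi z1 with hTr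
  have hTmT : Tm ⊆ T := fun y hy => hToc.out hz1T hz2T ⟨le_of_lt hy.1, le_of_lt hy.2⟩
  have hTmTl : Tm ⊆ Tl := fun y hy => ⟨hTmT hy, hy.2⟩
  have hTmTr : Tm ⊆ Tr := fun y hy => ⟨hTmT hy, hy.1⟩
  have hTnegTl : Tneg ⊆ Tl := fun y hy => ⟨hy.1, lt_trans hy.2 h12⟩
  have hTposTr : Tpos ⊆ Tr := fun y hy => ⟨hy.1, lt_trans h12 hy.2⟩
  have hTnegO : IsOpen Tneg := hTopen.inter isOpen_Iio
  have hTmO : IsOpen Tm := isOpen_Ioo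
  have hTposO : IsOpen Tpos := hTopen.inter isOpen_Ioi
  have hTlO : IsOpen Tl := hTopen.inter isOpen_Iio
  have hTrO : IsOpen Tr := hTopen.inter isOpen_Ioi
  -- dichotomies
  have D1n : (∀ x ∈ Tneg, 0 < g1 x) ∨ (∀ x ∈ Tneg, g1 x ≤ 0) := by
    refine pos_dichotomy hg1.1 hTnegO (hToc.inter Set.ordConnected_Iio) ?_
    intro x hx hxf
    have := hfr1 x hx.1 hxf
    subst this
    exact lt_irrefl x hx.2
  have D1r : (∀ x ∈ Tr, 0 < g1 x) ∨ (∀ x ∈ Tr, g1 x ≤ 0) := by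
    refine pos_dichotomy hg1.1 hTrO (hToc.inter Set.ordConnected_Ioi) ?_
    intro x hx hxf
    have := hfr1 x hx.1 hxf
    subst this
    exact lt_irrefl x hx.2
  have D2l : (∀ x ∈ Tl, 0 < g2 x) ∨ (∀ x ∈ Tl, g2 x ≤ 0) := by
    refine pos_dichotomy hg2.1 hTlO (hToc.inter Set.ordConnected_Iio) ?_
    intro x hx hxf
    have := hfr2 x hx.1 hxf
    subst this
    exact lt_irrefl x hx.2
  have D2p : (∀ x ∈ Tpos, 0 < g2 x) ∨ (∀ x ∈ Tpos, g2 x ≤ 0) := by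
    refine pos_dichotomy hg2.1 hTposO (hToc.inter Set.ordConnected_Ioi) ?_
    intro x hx hxf
    have := hfr2 x hx.1 hxf
    subst this
    exact lt_irrefl x hx.2
  have S1 : ¬((∀ x ∈ Tneg, g1 x ≤ 0) ∧ (∀ x ∈ Tr, g1 x ≤ 0)) := by
    rintro ⟨hn, hr⟩
    obtain ⟨y, hyT, hy⟩ := frontier_cluster hz1 hTopen hz1T
    rcases lt_trichotomy y z1 with hc | hc | hc
    · exact absurd hy (not_lt.mpr (hn y ⟨hyT, hc⟩))
    · subst hc; rw [hg1z1] at hy; exact lt_irrefl 0 hy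
    · exact absurd hy (not_lt.mpr (hr y ⟨hyT, hc⟩))
  have S2 : ¬((∀ x ∈ Tl, g2 x ≤ 0) ∧ (∀ x ∈ Tpos, g2 x ≤ 0)) := by
    rintro ⟨hn, hr⟩
    obtain ⟨y, hyT, hy⟩ := frontier_cluster hz2 hTopen hz2T
    rcases lt_trichotomy y z2 with hc | hc | hc
    · exact absurd hy (not_lt.mpr (hn y ⟨hyT, hc⟩))
    · subst hc; rw [hg2z2] at hy; exact lt_irrefl 0 hy
    · exact absurd hy (not_lt.mpr (hr y ⟨hyT, hc⟩))
  -- infinitude of regions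
  have hTnegInf : Tneg.Infinite := infinite_left hTopen hz1T
  have hTposInf : Tpos.Infinite := infinite_right hTopen hz2T
  have hTmInf : Tm.Infinite := Set.infinite_coe_iff.mp (Set.Ioo.infinite h12)
  -- seg containments
  have segTm : ∀ x0 ∈ Tm, seg A0 x0 ⊆ Tm := by
    intro x0 hx0 y hy
    constructor
    · by_contra hc
      push_neg at hc
      exact hy z1 hz1A (Set.mem_uIcc.mpr (Or.inr ⟨hc, le_of_lt hx0.1⟩))
    · by_contra hc
      push_neg at hc
      exact hy z2 hz2A (Set.mem_uIcc.mpr (Or.inl ⟨le_of_lt hx0.2, hc⟩))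
  have segT : ∀ x0 ∈ T, x0 ∉ A0 → seg A0 x0 ⊆ T := by
    intro x0 hx0T hx0A y hy
    intro t ht htm
    rcases Set.uIcc_subset_uIcc_union_uIcc (b := x0) htm with hm | hm
    · exact hTs _ (hToc.uIcc_subset hz1T hx0T hm) ht
    · exact hy t (hsA ht) hm
  have segTneg : ∀ x0 ∈ Tneg, x0 ∉ A0 → seg A0 x0 ⊆ Tneg := by
    intro x0 hx0 hx0A y hy
    refine ⟨segT x0 hx0.1 hx0A hy, ?_⟩
    rw [Set.mem_Iio]
    by_contra hc
    push_neg at hc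
    exact hy z1 hz1A (Set.mem_uIcc.mpr (Or.inl ⟨le_of_lt hx0.2, hc⟩))
  have segTpos : ∀ x0 ∈ Tpos, x0 ∉ A0 → seg A0 x0 ⊆ Tpos := by
    intro x0 hx0 hx0A y hy
    refine ⟨segT x0 hx0.1 hx0A hy, ?_⟩
    rw [Set.mem_Ioi]
    by_contra hc
    push_neg at hc
    exact hy z2 hz2A (Set.mem_uIcc.mpr (Or.inr ⟨hc, le_of_lt hx0.2⟩))
  -- finishers
  have finTm : (∀ y ∈ Tm, y ∉ frontier {x | 0 < h x}) → ∃ x0, x0 ∉ A0 ∧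
      ∀ y ∈ seg A0 x0, y ∉ frontier {x | 0 < h x} := by
    intro hf
    obtain ⟨x0, hx0R, hx0A⟩ := hTmInf.exists_notMem_finset A0
    exact ⟨x0, hx0A, fun y hy => hf y (segTm x0 hx0R hy)⟩
  have finTneg : (∀ y ∈ Tneg, y ∉ frontier {x | 0 < h x}) → ∃ x0, x0 ∉ A0 ∧
      ∀ y ∈ seg A0 x0, y ∉ frontier {x | 0 < h x} := by
    intro hf
    obtain ⟨x0, hx0R, hx0A⟩ := hTnegInf.exists_notMem_finset A0
    exact ⟨x0, hx0A, fun y hy => hf y (segTneg x0 hx0R hx0A hy)⟩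
  have finTpos : (∀ y ∈ Tpos, y ∉ frontier {x | 0 < h x}) → ∃ x0, x0 ∉ A0 ∧
      ∀ y ∈ seg A0 x0, y ∉ frontier {x | 0 < h x} := by
    intro hf
    obtain ⟨x0, hx0R, hx0A⟩ := hTposInf.exists_notMem_finset A0
    exact ⟨x0, hx0A, fun y hy => hf y (segTpos x0 hx0R hx0A hy)⟩
  -- two-region principle
  have twoRegion : ∀ (U R R' : Set ℝ), IsOpen U → AffOn h U → R ⊆ U → R' ⊆ U →
      (∀ a ∈ R, ∀ b ∈ R', a < b) →
      ((∀ y ∈ R, y ∉ frontier {x | 0 < h x}) → ∃ x0, x0 ∉ A0 ∧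
        ∀ y ∈ seg A0 x0, y ∉ frontier {x | 0 < h x}) →
      ((∀ y ∈ R', y ∉ frontier {x | 0 < h x}) → ∃ x0, x0 ∉ A0 ∧
        ∀ y ∈ seg A0 x0, y ∉ frontier {x | 0 < h x}) →
      ∃ x0, x0 ∉ A0 ∧ ∀ y ∈ seg A0 x0, y ∉ frontier {x | 0 < h x} := by
    intro U R R' hUo haff hRU hR'U hord fin1 fin2
    by_cases hR : ∃ y ∈ R, y ∈ frontier {x | 0 < h x}
    · obtain ⟨wa, hwa, hwaf⟩ := hR
      refine fin2 ?_
      intro y hy hyf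
      have := frontier_unique_of_affOn hhc hUo haff ⟨hRU hwa, hwaf⟩ ⟨hR'U hy, hyf⟩
      exact absurd this (ne_of_lt (hord wa hwa y hy))
    · push_neg at hR
      exact fin1 hR
  -- value helpers
  have v1zero : ∀ x, g1 x ≤ 0 → relu (g1 x) = 0 := fun x hx => relu_eq_zero hx
  have v2zero : ∀ x, g2 x ≤ 0 → relu (g2 x) = 0 := fun x hx => relu_eq_zero hx
  rcases D1r with r1pos | r1neg <;> rcases D2l with l2pos | l2neg
  · -- g1 > 0 on Tr, g2 > 0 on Tl
    rcases D1n with npos | nneg <;> rcases D2p with ppos | pneg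
    · -- (B,B): h affine on all of T
      have hB1 : ∀ x ∈ T, relu (g1 x) = g1 x := by
        intro x hxT
        rcases lt_trichotomy x z1 with hc | hc | hc
        · exact relu_eq_self (le_of_lt (npos x ⟨hxT, hc⟩))
        · subst hc; rw [hg1z1]; exact relu_eq_self le_rfl
        · exact relu_eq_self (le_of_lt (r1pos x ⟨hxT, hc⟩))
      have hB2 : ∀ x ∈ T, relu (g2 x) = g2 x := by
        intro x hxT
        rcases lt_trichotomy x z2 with hc | hc | hc
        · exact relu_eq_self (le_of_lt (l2pos x ⟨hxT, hc⟩))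
        · subst hc; rw [hg2z2]; exact relu_eq_self le_rfl
        · exact relu_eq_self (le_of_lt (ppos x ⟨hxT, hc⟩))
      have haff : AffOn h T := by
        refine ⟨c1 * p1 + c2 * p2, c1 * q1 + c2 * q2 + d, fun x hx => ?_⟩
        rw [hh x, hB1 x hx, hB2 x hx, hp1 x hx, hp2 x hx]; ring
      exact twoRegion T Tneg Tm hTopen haff (fun y hy => hy.1) hTmT
        (fun a ha b hb => lt_trans ha.2 hb.1) finTneg finTm
    · -- (B,L): h affine on Tl
      have hB1 : ∀ x ∈ T, relu (g1 x) = g1 x := by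
        intro x hxT
        rcases lt_trichotomy x z1 with hc | hc | hc
        · exact relu_eq_self (le_of_lt (npos x ⟨hxT, hc⟩))
        · subst hc; rw [hg1z1]; exact relu_eq_self le_rfl
        · exact relu_eq_self (le_of_lt (r1pos x ⟨hxT, hc⟩))
      have haff : AffOn h Tl := by
        refine ⟨c1 * p1 + c2 * p2, c1 * q1 + c2 * q2 + d, fun x hx => ?_⟩
        rw [hh x, hB1 x hx.1, relu_eq_self (le_of_lt (l2pos x hx)), hp1 x hx.1, hp2 x hx.1]
        ring
      exact twoRegion Tl Tneg Tm hTlO haff hTnegTl hTmTl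
        (fun a ha b hb => lt_trans ha.2 hb.1) finTneg finTm
    · -- (R,B): h affine on Tr
      have hB2 : ∀ x ∈ T, relu (g2 x) = g2 x := by
        intro x hxT
        rcases lt_trichotomy x z2 with hc | hc | hc
        · exact relu_eq_self (le_of_lt (l2pos x ⟨hxT, hc⟩))
        · subst hc; rw [hg2z2]; exact relu_eq_self le_rfl
        · exact relu_eq_self (le_of_lt (ppos x ⟨hxT, hc⟩))
      have haff : AffOn h Tr := by
        refine ⟨c1 * p1 + c2 * p2, c1 * q1 + c2 * q2 + d, fun x hx => ?_⟩
        rw [hh x, hB2 x hx.1, relu_eq_self (le_of_lt (r1pos x hx)), hp1 x hx.1, hp2 x hx.1]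
        ring
      exact twoRegion Tr Tm Tpos hTrO haff hTmTr hTposTr
        (fun a ha b hb => lt_trans ha.2 hb.2) finTm finTpos
    · -- (R,L): the sign-contradiction case
      by_cases hMm : ∃ y ∈ Tm, y ∈ frontier {x | 0 < h x}
      swap
      · push_neg at hMm; exact finTm hMm
      by_cases hMn : ∃ y ∈ Tneg, y ∈ frontier {x | 0 < h x}
      swap
      · push_neg at hMn; exact finTneg hMn
      by_cases hMp : ∃ y ∈ Tpos, y ∈ frontier {x | 0 < h x}
      swap
      · push_neg at hMp; exact finTpos hMp
      exfalso
      obtain ⟨w1, hw1, hw1f⟩ := hMm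
      obtain ⟨w0, hw0, hw0f⟩ := hMn
      obtain ⟨w2, hw2, hw2f⟩ := hMp
      -- pointwise formulas
      have hvneg : ∀ x ∈ Tneg, h x = c2 * (p2 * x + q2) + d := by
        intro x hx
        rw [hh x, v1zero x (nneg x hx), relu_eq_self (le_of_lt (l2pos x (hTnegTl hx))),
          hp2 x hx.1]
        ring
      have hvm : ∀ x ∈ Tm, h x = c1 * (p1 * x + q1) + c2 * (p2 * x + q2) + d := by
        intro x hx
        rw [hh x, relu_eq_self (le_of_lt (r1pos x (hTmTr hx))),
          relu_eq_self (le_of_lt (l2pos x (hTmTl hx))), hp1 x (hTmT hx), hp2 x (hTmT hx)]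
      have hvpos : ∀ x ∈ Tpos, h x = c1 * (p1 * x + q1) + d := by
        intro x hx
        rw [hh x, relu_eq_self (le_of_lt (r1pos x (hTposTr hx))), v2zero x (pneg x hx),
          hp1 x hx.1]
        ring
      have E0 : c2 * (p2 * w0 + q2) + d = 0 := by
        rw [← hvneg w0 hw0]; exact frontier_val_zero hhc hw0f
      have E1 : c1 * (p1 * w1 + q1) + c2 * (p2 * w1 + q2) + d = 0 := by
        rw [← hvm w1 hw1]; exact frontier_val_zero hhc hw1f
      have E2 : c1 * (p1 * w2 + q1) + d = 0 := by
        rw [← hvpos w2 hw2]; exact frontier_val_zero hhc hw2f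
      have z1eq : p1 * z1 + q1 = 0 := by rw [← hp1 z1 hz1T]; exact hg1z1
      have z2eq : p2 * z2 + q2 = 0 := by rw [← hp2 z2 hz2T]; exact hg2z2
      set α := c1 * p1 with hα
      set β := c2 * p2 with hβ
      have hbeta : β ≠ 0 := by
        intro h0
        refine not_frontier_of_const hTnegO (c := c2 * q2 + d) ?_ hw0 hw0f
        intro x hx
        rw [hvneg x hx]
        have : c2 * (p2 * x + q2) + d = β * x + (c2 * q2 + d) := by rw [hβ]; ring
        rw [this, h0]; ring
      have halpha : α ≠ 0 := by
        intro h0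
        refine not_frontier_of_const hTposO (c := c1 * q1 + d) ?_ hw2 hw2f
        intro x hx
        rw [hvpos x hx]
        have : c1 * (p1 * x + q1) + d = α * x + (c1 * q1 + d) := by rw [hα]; ring
        rw [this, h0]; ring
      have hab : α + β ≠ 0 := by
        intro h0
        refine not_frontier_of_const hTmO (c := c1 * q1 + c2 * q2 + d) ?_ hw1 hw1f
        intro x hx
        rw [hvm x hx]
        have : c1 * (p1 * x + q1) + c2 * (p2 * x + q2) + d
            = (α + β) * x + (c1 * q1 + c2 * q2 + d) := by rw [hα, hβ]; ring
        rw [this, h0]; ring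
      have E0' : β * (w0 - z2) + d = 0 := by
        have := z2eq
        rw [hβ]; linear_combination E0 - c2 * z2eq
      have E1' : α * (w1 - z1) + β * (w1 - z2) + d = 0 := by
        rw [hα, hβ]; linear_combination E1 - c1 * z1eq - c2 * z2eq
      have E2' : α * (w2 - z1) + d = 0 := by
        rw [hα]; linear_combination E2 - c1 * z1eq
      have eqA : (α + β) * (z1 - w1) = β * (z1 - w0) := by linear_combination E0' - E1'
      have eqB : (α + β) * (z2 - w1) = α * (z2 - w2) := by linear_combination E2' - E1'
      have ho0 : w0 < z1 := hw0.2
      have ho1 : z1 < w1 := hw1.1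
      have ho2 : w1 < z2 := hw1.2
      have ho3 : z2 < w2 := hw2.2
      rcases lt_trichotomy (α + β) 0 with habs | habs | habs
      · have h1 : 0 < (α + β) * (z1 - w1) := mul_pos_of_neg_of_neg habs (by linarith)
        rw [eqA] at h1
        have hbpos : 0 < β := by nlinarith
        have h2 : (α + β) * (z2 - w1) < 0 := mul_neg_of_neg_of_pos habs (by linarith)
        rw [eqB] at h2
        have hapos : 0 < α := by nlinarith
        linarith
      · exact hab habs
      · have h1 : (α + β) * (z1 - w1) < 0 := mul_neg_of_pos_of_neg habs (by linarith)
        rw [eqA] at h1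
        have hbneg : β < 0 := by nlinarith
        have h2 : 0 < (α + β) * (z2 - w1) := mul_pos habs (by linarith)
        rw [eqB] at h2
        have haneg : α < 0 := by nlinarith
        linarith
  · -- g1 > 0 on Tr, g2 ≤ 0 on Tl
    have ppos : ∀ x ∈ Tpos, 0 < g2 x := by
      rcases D2p with h' | h'
      · exact h'
      · exact absurd ⟨l2neg, h'⟩ S2
    rcases D1n with npos | nneg
    · -- (B,R): h affine on Tl
      have hB1 : ∀ x ∈ T, relu (g1 x) = g1 x := by
        intro x hxT
        rcases lt_trichotomy x z1 with hc | hc | hc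
        · exact relu_eq_self (le_of_lt (npos x ⟨hxT, hc⟩))
        · subst hc; rw [hg1z1]; exact relu_eq_self le_rfl
        · exact relu_eq_self (le_of_lt (r1pos x ⟨hxT, hc⟩))
      have haff : AffOn h Tl := by
        refine ⟨c1 * p1, c1 * q1 + d, fun x hx => ?_⟩
        rw [hh x, hB1 x hx.1, v2zero x (l2neg x hx), hp1 x hx.1]
        ring
      exact twoRegion Tl Tneg Tm hTlO haff hTnegTl hTmTl
        (fun a ha b hb => lt_trans ha.2 hb.1) finTneg finTm
    · -- (R,R): h constant on Tneg
      refine finTneg ?_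
      intro y hy
      refine not_frontier_of_const hTnegO (c := d) ?_ hy
      intro x hx
      rw [hh x, v1zero x (nneg x hx), v2zero x (l2neg x (hTnegTl hx))]
      ring
  · -- g1 ≤ 0 on Tr, g2 > 0 on Tl
    rcases D2p with ppos | pneg
    · -- (L,B): h affine on Tr
      have hB2 : ∀ x ∈ T, relu (g2 x) = g2 x := by
        intro x hxT
        rcases lt_trichotomy x z2 with hc | hc | hc
        · exact relu_eq_self (le_of_lt (l2pos x ⟨hxT, hc⟩))
        · subst hc; rw [hg2z2]; exact relu_eq_self le_rfl
        · exact relu_eq_self (le_of_lt (ppos x ⟨hxT, hc⟩))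
      have haff : AffOn h Tr := by
        refine ⟨c2 * p2, c2 * q2 + d, fun x hx => ?_⟩
        rw [hh x, v1zero x (r1neg x hx), hB2 x hx.1, hp2 x hx.1]
        ring
      exact twoRegion Tr Tm Tpos hTrO haff hTmTr hTposTr
        (fun a ha b hb => lt_trans ha.2 hb.2) finTm finTpos
    · -- (L,L): h constant on Tpos
      refine finTpos ?_
      intro y hy
      refine not_frontier_of_const hTposO (c := d) ?_ hy
      intro x hx
      rw [hh x, v1zero x (r1neg x (hTposTr hx)), v2zero x (pneg x hx)]
      ring
  · -- g1 ≤ 0 on Tr, g2 ≤ 0 on Tl: h constant on Tm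
    refine finTm ?_
    intro y hy
    refine not_frontier_of_const hTmO (c := d) ?_ hy
    intro x hx
    rw [hh x, v1zero x (r1neg x (hTmTr hx)), v2zero x (l2neg x (hTmTl hx))]
    ring

end KnotAux
namespace KnotAux

/-- Narrow layer of width 2: the next layer's knot container loses at least one knot. -/
theorem narrow2 {s : Finset ℝ} {g1 g2 : ℝ → ℝ} (hg1 : IsPW s g1) (hg2 : IsPW s g2)
    {κ : Type*} [Fintype κ] (hκ : 1 ≤ Fintype.card κ) (c1 c2 d : κ → ℝ) (H : κ → ℝ → ℝ)
    (hH : ∀ k x, H k x = c1 k * relu (g1 x) + c2 k * relu (g2 x) + d k) :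
    ∃ K' : Finset ℝ, (∀ k, IsPW K' (fun x => relu (H k x))) ∧
      K'.card + 1 ≤ (Fintype.card κ + 1) * (3 * s.card + 2) + Fintype.card κ := by
  classical
  obtain ⟨Z1, hZ11, hZ12, hZ13, hZ14⟩ := reluStep hg1
  obtain ⟨Z2, hZ21, hZ22, hZ23, hZ24⟩ := reluStep hg2
  set q := Fintype.card κ
  set A0 : Finset ℝ := s ∪ (Z1 ∪ Z2) with hA0
  have hsA : s ⊆ A0 := Finset.subset_union_left
  have hZ1A : Z1 ⊆ A0 := (Finset.subset_union_left).trans Finset.subset_union_right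
  have hZ2A : Z2 ⊆ A0 := (Finset.subset_union_right).trans Finset.subset_union_right
  have hv1PW : IsPW A0 (fun x => relu (g1 x)) := hZ14.mono (by
    intro t ht
    rcases Finset.mem_union.mp ht with h | h
    · exact hsA (Finset.filter_subset _ _ h)
    · exact hZ1A h)
  have hv2PW : IsPW A0 (fun x => relu (g2 x)) := hZ24.mono (by
    intro t ht
    rcases Finset.mem_union.mp ht with h | h
    · exact hsA (Finset.filter_subset _ _ h)
    · exact hZ2A h)
  have hHPW : ∀ k, IsPW A0 (H k) := by
    intro k
    refine (((hv1PW.const_mul (c1 k)).add ((hv2PW.const_mul (c2 k)))).add_const (d k)).congr ?_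
    intro x; rw [hH k x]
  by_cases hcr : ∃ z1 ∈ Z1, ∃ z2 ∈ Z2, z1 ≠ z2 ∧ ∀ t ∈ s, t ∉ Set.uIcc z1 z2
  · -- two crossings in a common interval: every next neuron misses an interval
    obtain ⟨z1, hz1Z, z2, hz2Z, hne, hfree⟩ := hcr
    have hz1f := (hZ11 z1 hz1Z).1
    have hz1s' := (hZ11 z1 hz1Z).2
    have hz2f := (hZ21 z2 hz2Z).1
    have hz2s' := (hZ21 z2 hz2Z).2
    have hmiss : ∀ k, ∃ x0, x0 ∉ A0 ∧ ∀ y ∈ seg A0 x0, y ∉ frontier {x | 0 < H k x} := by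
      intro k
      rcases hne.lt_or_gt with hlt | hlt
      · exact cross hg1 hg2 A0 hsA (hZ1A hz1Z) (hZ2A hz2Z) hz1f hz1s' hz2f hz2s' hlt hfree
          (c1 k) (c2 k) (d k) (H k) (hH k)
      · refine cross hg2 hg1 A0 hsA (hZ2A hz2Z) (hZ1A hz1Z) hz2f hz2s' hz1f hz1s' hlt
          (fun t ht htm => hfree t ht (Set.uIcc_comm z1 z2 ▸ htm))
          (c2 k) (c1 k) (d k) (H k) (fun x => by rw [hH k x]; ring)
    obtain ⟨A', _, hA'PW, hA'card⟩ := step' H hHPW hmiss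
    refine ⟨A', hA'PW, ?_⟩
    have hA0card : A0.card ≤ 3 * s.card + 2 := by
      have h1 : Z1.card ≤ s.card + 1 := fcount (fun z hz => (hZ11 z hz).2) hZ13
      have h2 : Z2.card ≤ s.card + 1 := fcount (fun z hz => (hZ21 z hz).2) hZ23
      calc A0.card ≤ s.card + (Z1 ∪ Z2).card := Finset.card_union_le _ _
        _ ≤ s.card + (Z1.card + Z2.card) := by
            exact Nat.add_le_add_left (Finset.card_union_le _ _) _
        _ ≤ 3 * s.card + 2 := by omega
    have : A'.card ≤ (q + 1) * (3 * s.card + 2) := by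
      calc A'.card ≤ A0.card + q * A0.card := hA'card
        _ = (q + 1) * A0.card := by ring
        _ ≤ (q + 1) * (3 * s.card + 2) := Nat.mul_le_mul_left _ hA0card
    omega
  · -- no such pair: the crossings of the two neurons fit in s.card + 1 intervals
    have hZucard : (Z1 ∪ Z2).card ≤ s.card + 1 := by
      refine fcount (A := s) ?_ ?_
      · intro z hz
        rcases Finset.mem_union.mp hz with h | h
        · exact (hZ11 z h).2
        · exact (hZ21 z h).2
      · intro z hz z' hz' hfree
        rcases Finset.mem_union.mp hz with h | h <;> rcases Finset.mem_union.mp hz' with h' | h'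
        · exact hZ13 z h z' h' hfree
        · by_contra hne
          exact hcr ⟨z, h, z', h', hne, hfree⟩
        · by_contra hne
          exact hcr ⟨z', h', z, h, Ne.symm hne,
            fun t ht htm => hfree t ht (Set.uIcc_comm z z' ▸ htm)⟩
        · exact hZ23 z h z' h' hfree
    have hA0card : A0.card ≤ 2 * s.card + 1 := by
      calc A0.card ≤ s.card + (Z1 ∪ Z2).card := Finset.card_union_le _ _
        _ ≤ 2 * s.card + 1 := by omega
    obtain ⟨A', _, hA'PW, hA'card⟩ := step H hHPW
    refine ⟨A', hA'PW, ?_⟩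
    have : A'.card ≤ (2 * s.card + 1) + q * (2 * s.card + 2) := by
      calc A'.card ≤ A0.card + q * (A0.card + 1) := hA'card
        _ ≤ (2 * s.card + 1) + q * (2 * s.card + 2) := by
            refine Nat.add_le_add hA0card (Nat.mul_le_mul_left _ (by omega))
    nlinarith [Nat.zero_le (q * s.card), Nat.zero_le s.card]

end KnotAux
namespace KnotAux

/-- A single relu neuron on top of a PW function loses a knot relative to `2*Bp + 1`. -/
theorem last1 {s : Finset ℝ} {g : ℝ → ℝ} (hg : IsPW s g) {Bp : ℕ} (hBp : 2 ≤ Bp)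
    (hcard : s.card ≤ Bp) :
    ∃ K' : Finset ℝ, IsPW K' (fun x => relu (g x)) ∧ K'.card ≤ 2 * Bp := by
  classical
  obtain ⟨Z, hZ1, hZ2, hZ3, hZ4⟩ := reluStep hg
  have hZcard : Z.card ≤ s.card + 1 := fcount (fun z hz => (hZ1 z hz).2) hZ3
  by_cases hneg : ∃ t ∈ s, g t < 0
  · -- a knot of the previous container is killed
    obtain ⟨t0, ht0, ht0g⟩ := hneg
    refine ⟨s.filter (fun t => 0 ≤ g t) ∪ Z, hZ4, ?_⟩
    have hf : (s.filter (fun t => 0 ≤ g t)).card ≤ s.card - 1 := by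
      have hsub : s.filter (fun t => 0 ≤ g t) ⊆ s.erase t0 := by
        intro u hu
        rw [Finset.mem_filter] at hu
        refine Finset.mem_erase.mpr ⟨?_, hu.1⟩
        intro he
        rw [he] at hu
        linarith [hu.2]
      calc (s.filter (fun t => 0 ≤ g t)).card ≤ (s.erase t0).card := Finset.card_le_card hsub
        _ = s.card - 1 := Finset.card_erase_of_mem ht0
    have hs1 : 1 ≤ s.card := Finset.card_pos.mpr ⟨t0, ht0⟩
    calc (s.filter (fun t => 0 ≤ g t) ∪ Z).card
        ≤ (s.filter (fun t => 0 ≤ g t)).card + Z.card := Finset.card_union_le _ _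
      _ ≤ (s.card - 1) + (s.card + 1) := Nat.add_le_add hf hZcard
      _ ≤ 2 * Bp := by omega
  · -- all previous knots survive, but then only the unbounded intervals can cross
    push_neg at hneg
    have hub : ∀ z ∈ Z, ¬((∃ t ∈ s, t < z) ∧ (∃ t ∈ s, z < t)) := by
      rintro z hz ⟨⟨tl, htl, htlz⟩, ⟨tr, htr, hztr⟩⟩
      have hzf := (hZ1 z hz).1
      have hzs := (hZ1 z hz).2
      have hlne : (s.filter (· < z)).Nonempty := ⟨tl, Finset.mem_filter.mpr ⟨htl, htlz⟩⟩
      have hrne : (s.filter (z < ·)).Nonempty := ⟨tr, Finset.mem_filter.mpr ⟨htr, hztr⟩⟩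
      obtain ⟨a, haz, has, hamax⟩ : ∃ a, a < z ∧ a ∈ s ∧ ∀ u ∈ s, u < z → u ≤ a := by
        refine ⟨(s.filter (· < z)).max' hlne, ?_, ?_, ?_⟩
        · exact (Finset.mem_filter.mp ((s.filter (· < z)).max'_mem hlne)).2
        · exact (Finset.mem_filter.mp ((s.filter (· < z)).max'_mem hlne)).1
        · exact fun u hu huz => Finset.le_max' (s.filter (· < z)) u (Finset.mem_filter.mpr ⟨hu, huz⟩)
      obtain ⟨bb, hzb, hbs, hbmin⟩ : ∃ bb, z < bb ∧ bb ∈ s ∧ ∀ u ∈ s, z < u → bb ≤ u := by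
        refine ⟨(s.filter (z < ·)).min' hrne, ?_, ?_, ?_⟩
        · exact (Finset.mem_filter.mp ((s.filter (z < ·)).min'_mem hrne)).2
        · exact (Finset.mem_filter.mp ((s.filter (z < ·)).min'_mem hrne)).1
        · exact fun u hu huz => Finset.min'_le (s.filter (z < ·)) u (Finset.mem_filter.mpr ⟨hu, huz⟩)
      have hfree : ∀ t ∈ s, t ∉ Set.Ioo a bb := by
        intro t ht htm
        rcases lt_trichotomy t z with hc | hc | hc
        · have : t ≤ a := hamax t ht hc
          linarith [htm.1]
        · exact hzs (hc ▸ ht)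
        · have : bb ≤ t := hbmin t ht hc
          linarith [htm.2]
      obtain ⟨p, q, hpq⟩ := hg.2 (Set.Ioo a bb) isOpen_Ioo Set.ordConnected_Ioo hfree
      have hzU : z ∈ Set.Ioo a bb := ⟨haz, hzb⟩
      have hgz : g z = 0 := frontier_val_zero hg.1 hzf
      have hzeq : p * z + q = 0 := by rw [← hpq z hzU]; exact hgz
      have hp : p ≠ 0 := by
        intro h0
        refine not_frontier_of_const isOpen_Ioo (c := q) ?_ hzU hzf
        intro x hx
        rw [hpq x hx, h0]; ring
      have hcl : Set.EqOn g (fun x => p * x + q) (Set.Icc a bb) := by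
        have h1 : Set.EqOn g (fun x => p * x + q) (Set.Ioo a bb) := fun x hx => hpq x hx
        have := h1.closure hg.1 ((continuous_const.mul continuous_id).add continuous_const)
        rwa [closure_Ioo (ne_of_lt (lt_trans haz hzb))] at this
      have hga : g a = p * a + q := hcl ⟨le_refl a, le_of_lt (lt_trans haz hzb)⟩
      have hgb : g bb = p * bb + q := hcl ⟨le_of_lt (lt_trans haz hzb), le_refl bb⟩
      rcases lt_or_gt_of_ne hp with hplt | hpgt
      · have : g bb < 0 := by rw [hgb]; nlinarith
        linarith [hneg bb hbs]
      · have : g a < 0 := by rw [hga]; nlinarith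
        linarith [hneg a has]
    have hZ2' : Z.card ≤ 2 := fcount2 (fun z hz => (hZ1 z hz).2) hZ3 hub
    refine ⟨s ∪ Z, hZ4.mono ?_, ?_⟩
    · intro t ht
      rcases Finset.mem_union.mp ht with h | h
      · exact Finset.mem_union_left _ (Finset.filter_subset _ _ h)
      · exact Finset.mem_union_right _ h
    · calc (s ∪ Z).card ≤ s.card + Z.card := Finset.card_union_le _ _
        _ ≤ Bp + 2 := Nat.add_le_add hcard hZ2'
        _ ≤ 2 * Bp := by omega

end KnotAux
namespace KnotAux

/-- The knot-count bound `B_i` for (0-indexed) layer `i`. -/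
def Bd (n : ℕ → ℕ) : ℕ → ℕ
  | 0 => n 0
  | (i+1) => (n (i+1) + 1) * Bd n i + n (i+1)

theorem bd_eq (n : ℕ → ℕ) : ∀ L, Bd n L =
    ∑ i ∈ Finset.range (L+1), n i * ∏ j ∈ Finset.Ico (i+1) (L+1), (n j + 1) := by
  intro L
  induction L with
  | zero => simp [Bd]
  | succ L ih =>
    have hstep : ∀ i ∈ Finset.range (L+1),
        n i * ∏ j ∈ Finset.Ico (i+1) (L+1+1), (n j + 1)
          = (n i * ∏ j ∈ Finset.Ico (i+1) (L+1), (n j + 1)) * (n (L+1) + 1) := by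
      intro i hi
      rw [Finset.mem_range] at hi
      rw [Finset.prod_Ico_succ_top (by omega : i + 1 ≤ L + 1)]
      ring
    rw [Finset.sum_range_succ, Finset.sum_congr rfl hstep, ← Finset.sum_mul, ← ih]
    show Bd n (L+1) = Bd n L * (n (L+1) + 1) + n (L+1) * ∏ j ∈ Finset.Ico (L+2) (L+2), (n j + 1)
    rw [Finset.Ico_self, Finset.prod_empty]
    show (n (L+1) + 1) * Bd n L + n (L+1) = _
    ring

theorem bd_ge_first (n : ℕ → ℕ) : ∀ L, n 0 ≤ Bd n L := by
  intro L
  induction L with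
  | zero => exact le_refl _
  | succ L ih =>
    calc n 0 ≤ Bd n L := ih
      _ ≤ (n (L+1)+1) * Bd n L := Nat.le_mul_of_pos_left _ (Nat.succ_pos _)
      _ ≤ Bd n (L+1) := Nat.le_add_right _ _

end KnotAux


open KnotAux in
/-- **Corollary (the bound is not tight for narrow layers).** For an `l`-layer (`l ≥ 2`)
`ℝ → ℝ^p` ReLU network, if some hidden layer before the last has fewer than 3 neurons,
or the last hidden layer has exactly 1 neuron, then for every choice of weights and
biases the number of knots is strictly less than
`∑_{i=1}^{l} n_i ∏_{j=i+1}^{l} (n_j + 1)` (here 0-indexed). -/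
theorem knot_upper_bound_not_tight (l p : ℕ) (hl : 2 ≤ l) (hp : 1 ≤ p)
    (n : ℕ → ℕ) (hn : ∀ i, i < l → 1 ≤ n i)
    (hnarrow : (∃ i, i < l - 1 ∧ n i < 3) ∨ n (l - 1) = 1)
    (w1 b1 : Fin (n 0) → ℝ)
    (w : (i : ℕ) → Fin (n (i + 1)) → Fin (n i) → ℝ)
    (b : (i : ℕ) → Fin (n (i + 1)) → ℝ)
    (wOut : Fin p → Fin (n (l - 1)) → ℝ) (bOut : Fin p → ℝ) :
    {x : ℝ | ¬ DifferentiableAt ℝ (netOut l p n w1 b1 w b wOut bOut) x}.Finite ∧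
    {x : ℝ | ¬ DifferentiableAt ℝ (netOut l p n w1 b1 w b wOut bOut) x}.ncard <
      ∑ i ∈ Finset.range l, n i * ∏ j ∈ Finset.Ico (i + 1) l, (n j + 1) := by
  classical
  obtain ⟨l', rfl⟩ : ∃ l', l = l' + 2 := ⟨l - 2, by omega⟩
  set F := layerOut n w1 b1 w b with hFdef
  -- basic invariant: layer i has a knot container of size at most `Bd n i`
  have inv : ∀ i, ∃ K : Finset ℝ,
      (∀ k : Fin (n i), IsPW K (fun x => F i x k)) ∧ K.card ≤ Bd n i := by
    intro i
    induction i with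
    | zero =>
      have hid : IsPW (∅ : Finset ℝ) (fun x : ℝ => x) :=
        ⟨continuous_id, fun U _ _ _ => ⟨1, 0, fun x _ => by ring⟩⟩
      have hH : ∀ k : Fin (n 0), IsPW (∅ : Finset ℝ) (fun x => w1 k * x + b1 k) :=
        fun k => (hid.const_mul (w1 k)).add_const (b1 k)
      obtain ⟨A', _, hPW, hcard⟩ := step (fun (k : Fin (n 0)) x => w1 k * x + b1 k) hH
      refine ⟨A', fun k => hPW k, ?_⟩
      simpa [Bd] using hcard
    | succ i ih =>
      obtain ⟨K, hK, hKcard⟩ := ih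
      have hH : ∀ k : Fin (n (i+1)),
          IsPW K (fun x => (∑ j, w i k j * F i x j) + b i k) :=
        fun k => IsPW.combo _ hK (w i k) (b i k)
      obtain ⟨A', _, hPW, hcard⟩ := step _ hH
      refine ⟨A', fun k => hPW k, ?_⟩
      have : A'.card ≤ K.card + n (i+1) * (K.card + 1) := by
        simpa [Fintype.card_fin] using hcard
      calc A'.card ≤ K.card + n (i+1) * (K.card + 1) := this
        _ ≤ Bd n i + n (i+1) * (Bd n i + 1) :=
            Nat.add_le_add hKcard (Nat.mul_le_mul_left _ (by omega))
        _ = Bd n (i+1) := by show _ = (n (i+1) + 1) * Bd n i + n (i+1); ring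
  -- propagation of a deficient container
  have prop : ∀ (i0 : ℕ) (K0 : Finset ℝ),
      (∀ k : Fin (n i0), IsPW K0 (fun x => F i0 x k)) → K0.card + 1 ≤ Bd n i0 →
      ∀ j, i0 ≤ j → ∃ K : Finset ℝ,
        (∀ k : Fin (n j), IsPW K (fun x => F j x k)) ∧ K.card + 1 ≤ Bd n j := by
    intro i0 K0 hK0 hc j hij
    induction j, hij using Nat.le_induction with
    | base => exact ⟨K0, hK0, hc⟩
    | succ j hij ihj =>
      obtain ⟨K, hK, hKc⟩ := ihj
      have hH : ∀ k : Fin (n (j+1)),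
          IsPW K (fun x => (∑ j', w j k j' * F j x j') + b j k) :=
        fun k => IsPW.combo _ hK (w j k) (b j k)
      obtain ⟨A', _, hPW, hcard⟩ := step _ hH
      refine ⟨A', fun k => hPW k, ?_⟩
      have h1 : A'.card ≤ K.card + n (j+1) * (K.card + 1) := by
        simpa [Fintype.card_fin] using hcard
      have h2 : Bd n (j+1) = (n (j+1) + 1) * Bd n j + n (j+1) := rfl
      nlinarith [hKc, Nat.zero_le (n (j+1))]
  -- the deficient container for the last hidden layer
  have main : ∃ K : Finset ℝ,
      (∀ k : Fin (n (l'+1)), IsPW K (fun x => F (l'+1) x k)) ∧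
      K.card + 1 ≤ Bd n (l'+1) := by
    by_cases hmid : ∃ i, i < l' + 1 ∧ n i < 3
    · -- a narrow layer before the last one
      obtain ⟨i0, hi0, hni0⟩ := hmid
      have hn0 : 1 ≤ n i0 := hn i0 (by omega)
      have hq : 1 ≤ Fintype.card (Fin (n (i0+1))) := by
        simpa [Fintype.card_fin] using hn (i0+1) (by omega)
      -- the narrow layer's neurons as relus of PW functions
      obtain ⟨s, g, hgPW, hgF, hsB⟩ : ∃ (s : Finset ℝ) (g : Fin (n i0) → ℝ → ℝ),
          (∀ j, IsPW s (g j)) ∧ (∀ j x, F i0 x j = relu (g j x)) ∧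
          (n i0 + 1) * s.card + n i0 ≤ Bd n i0 := by
        cases i0 with
        | zero =>
          have hid : IsPW (∅ : Finset ℝ) (fun x : ℝ => x) :=
            ⟨continuous_id, fun U _ _ _ => ⟨1, 0, fun x _ => by ring⟩⟩
          exact ⟨∅, fun j x => w1 j * x + b1 j,
            fun j => (hid.const_mul (w1 j)).add_const (b1 j),
            fun j x => rfl, by simp [Bd]⟩
        | succ i' =>
          obtain ⟨s, hs, hscard⟩ := inv i'
          refine ⟨s, fun j x => (∑ j', w i' j j' * F i' x j') + b i' j,
            fun j => IsPW.combo _ hs (w i' j) (b i' j), fun j x => rfl, ?_⟩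
          have : Bd n (i'+1) = (n (i'+1) + 1) * Bd n i' + n (i'+1) := rfl
          rw [this]
          exact Nat.add_le_add_right (Nat.mul_le_mul_left _ hscard) _
      set H : Fin (n (i0+1)) → ℝ → ℝ :=
        fun k x => (∑ j, w i0 k j * F i0 x j) + b i0 k with hHdef
      have hdef : ∃ K' : Finset ℝ, (∀ k, IsPW K' (fun x => relu (H k x))) ∧
          K'.card + 1 ≤ Bd n (i0+1) := by
        have hn12 : n i0 = 1 ∨ n i0 = 2 := by omega
        rcases hn12 with e | e
        · -- width 1
          have hj0 : (0 : ℕ) < n i0 := by omega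
          set j0 : Fin (n i0) := ⟨0, hj0⟩ with hj0def
          have hsum : ∀ k x, H k x = w i0 k j0 * relu (g j0 x) + b i0 k := by
            intro k x
            show (∑ j, w i0 k j * F i0 x j) + b i0 k = w i0 k j0 * relu (g j0 x) + b i0 k
            have : (∑ j, w i0 k j * F i0 x j) = w i0 k j0 * F i0 x j0 := by
              refine Finset.sum_eq_single_of_mem j0 (Finset.mem_univ _) ?_
              intro j _ hj
              exact absurd (Fin.ext (by omega)) hj
            rw [this, hgF j0 x]
          obtain ⟨K', hK'PW, hK'c⟩ := narrow1 (hgPW j0) hq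
            (fun k => w i0 k j0) (fun k => b i0 k) H hsum
          refine ⟨K', hK'PW, le_trans hK'c ?_⟩
          have h1 : 2 * s.card + 1 ≤ Bd n i0 := by
            rw [e] at hsB; omega
          have h2 : Bd n (i0+1) = (n (i0+1) + 1) * Bd n i0 + n (i0+1) := rfl
          rw [h2]
          simp only [Fintype.card_fin]
          exact Nat.add_le_add_right (Nat.mul_le_mul_left _ h1) _
        · -- width 2
          have hj0 : (0 : ℕ) < n i0 := by omega
          have hj1 : (1 : ℕ) < n i0 := by omega
          set j0 : Fin (n i0) := ⟨0, hj0⟩ with hj0def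
          set j1 : Fin (n i0) := ⟨1, hj1⟩ with hj1def
          have hne : j0 ≠ j1 := by
            intro hc
            have := congrArg Fin.val hc
            simp [hj0def, hj1def] at this
          have huniv : (Finset.univ : Finset (Fin (n i0))) = {j0, j1} := by
            ext j
            simp only [Finset.mem_univ, true_iff, Finset.mem_insert, Finset.mem_singleton]
            have : (j : ℕ) = 0 ∨ (j : ℕ) = 1 := by omega
            rcases this with h | h
            · exact Or.inl (Fin.ext h)
            · exact Or.inr (Fin.ext h)
          have hsum : ∀ k x, H k x
              = w i0 k j0 * relu (g j0 x) + w i0 k j1 * relu (g j1 x) + b i0 k := by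
            intro k x
            show (∑ j, w i0 k j * F i0 x j) + b i0 k
              = w i0 k j0 * relu (g j0 x) + w i0 k j1 * relu (g j1 x) + b i0 k
            have : (∑ j, w i0 k j * F i0 x j)
                = w i0 k j0 * F i0 x j0 + w i0 k j1 * F i0 x j1 := by
              rw [huniv, Finset.sum_insert (by simpa using hne), Finset.sum_singleton]
            rw [this, hgF j0 x, hgF j1 x]
          obtain ⟨K', hK'PW, hK'c⟩ := narrow2 (hgPW j0) (hgPW j1) hq
            (fun k => w i0 k j0) (fun k => w i0 k j1) (fun k => b i0 k) H hsum
          refine ⟨K', hK'PW, le_trans hK'c ?_⟩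
          have h1 : 3 * s.card + 2 ≤ Bd n i0 := by
            rw [e] at hsB; omega
          have h2 : Bd n (i0+1) = (n (i0+1) + 1) * Bd n i0 + n (i0+1) := rfl
          rw [h2]
          simp only [Fintype.card_fin]
          exact Nat.add_le_add_right (Nat.mul_le_mul_left _ h1) _
      obtain ⟨K', hK'PW, hK'c⟩ := hdef
      exact prop (i0+1) K' (fun k => hK'PW k) hK'c (l'+1) (by omega)
    · -- all layers before the last are wide, so the last hidden layer has width 1
      push_neg at hmid
      have hlast : n (l'+1) = 1 := by
        rcases hnarrow with ⟨i, hi, hni⟩ | h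
        · have : i < l' + 1 := by omega
          have := hmid i this
          omega
        · exact h
      obtain ⟨s, hs, hscard⟩ := inv l'
      have hBp2 : 2 ≤ Bd n l' := by
        have h3 : 3 ≤ n 0 := hmid 0 (by omega)
        have := bd_ge_first n l'
        omega
      have hg : ∀ j : Fin (n (l'+1)),
          IsPW s (fun x => (∑ j', w l' j j' * F l' x j') + b l' j) :=
        fun j => IsPW.combo _ hs (w l' j) (b l' j)
      have hlj : ∀ j : Fin (n (l'+1)), ∃ A : Finset ℝ,
          IsPW A (fun x => relu ((∑ j', w l' j j' * F l' x j') + b l' j)) ∧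
          A.card ≤ 2 * Bd n l' :=
        fun j => last1 (hg j) hBp2 hscard
      choose A hA1 hA2 using hlj
      refine ⟨Finset.univ.biUnion A, ?_, ?_⟩
      · intro k
        exact (hA1 k).mono (Finset.subset_biUnion_of_mem A (Finset.mem_univ k))
      · have hcard : (Finset.univ.biUnion A).card ≤ ∑ j, (A j).card :=
          Finset.card_biUnion_le
        have hsum : (∑ j, (A j).card) ≤ n (l'+1) * (2 * Bd n l') := by
          calc (∑ j, (A j).card) ≤ ∑ _j : Fin (n (l'+1)), 2 * Bd n l' :=
              Finset.sum_le_sum (fun j _ => hA2 j)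
            _ = n (l'+1) * (2 * Bd n l') := by
                rw [Finset.sum_const, Finset.card_univ, Fintype.card_fin, smul_eq_mul]
          
        have hsum2 : (∑ j, (A j).card) ≤ 2 * Bd n l' := by
          calc (∑ j, (A j).card) ≤ n (l'+1) * (2 * Bd n l') := hsum
            _ = 2 * Bd n l' := by rw [hlast, one_mul]
        have h2 : Bd n (l'+1) = 2 * Bd n l' + 1 := by
          show (n (l'+1) + 1) * Bd n l' + n (l'+1) = 2 * Bd n l' + 1
          rw [hlast]
        omega
  obtain ⟨K, hKPW, hKc⟩ := main
  have hdiff : ∀ x : ℝ, x ∉ K →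
      DifferentiableAt ℝ (netOut (l'+2) p n w1 b1 w b wOut bOut) x := by
    intro x hx
    rw [differentiableAt_pi]
    intro k
    have : (fun x => netOut (l'+2) p n w1 b1 w b wOut bOut x k)
        = fun x => (∑ j, wOut k j * F (l'+1) x j) + bOut k := rfl
    rw [this]
    refine DifferentiableAt.add_const _ ?_
    refine DifferentiableAt.fun_sum ?_
    intro j _
    exact ((hKPW j).differentiableAt hx).const_mul _
  have hsub : {x : ℝ | ¬ DifferentiableAt ℝ (netOut (l'+2) p n w1 b1 w b wOut bOut) x}
      ⊆ ↑K := by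
    intro x hx
    by_contra h
    exact hx (hdiff x h)
  refine ⟨Set.Finite.subset K.finite_toSet hsub, ?_⟩
  have h1 : {x : ℝ | ¬ DifferentiableAt ℝ (netOut (l'+2) p n w1 b1 w b wOut bOut) x}.ncard
      ≤ K.card := by
    have := Set.ncard_le_ncard hsub K.finite_toSet
    rwa [Set.ncard_coe_finset] at this
  have h2 : (∑ i ∈ Finset.range (l'+2), n i * ∏ j ∈ Finset.Ico (i + 1) (l'+2), (n j + 1))
      = Bd n (l'+1) := by
    rw [bd_eq n (l'+1)]
  omega
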